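/- Let S be a metric semigroup and let π be a tight Borel probability measure on S such that every π-harmonic function in LUC(S) is constant. Then S is amenable, i.e. there exists a norm-one positive linear functional φ : LUC(S) → ℂ satisfying φ(δ_a * f) = φ(f) for all a ∈ S and all f ∈ LUC(S). -/

import Mathlib

open MeasureTheory BoundedContinuousFunction Filter Topology
open scoped ENNReal

/-- The left translate `δ_a * f` of a bounded continuous function `f`,
`(δ_a * f)(x) = f (a * x)`. -/
noncomputable def lTrans {S : Type*} [Semigroup S] [MetricSpace S] [ContinuousMul S]
    (a : S) (f : S →ᵇ ℂ) : S →ᵇ ℂ :=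
  f.compContinuous ⟨fun x => a * x, continuous_const.mul continuous_id⟩

/-- `LUC S` is the space of bounded (left) uniformly continuous functions on `S`, i.e.
bounded continuous `f : S → ℂ` such that `a ↦ δ_a * f` is continuous into `S →ᵇ ℂ`. -/
noncomputable def LUC (S : Type*) [Semigroup S] [MetricSpace S] [ContinuousMul S] :
    Submodule ℂ (S →ᵇ ℂ) where
  carrier := {f | Continuous fun a : S => lTrans a f}
  add_mem' := by
    intro f g hf hg
    show Continuous fun a : S => lTrans a (f + g)
    have h : (fun a : S => lTrans a (f + g)) = fun a : S => lTrans a f + lTrans a g := by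
      funext a; ext x; simp [lTrans]
    rw [h]; exact hf.add hg
  zero_mem' := by
    show Continuous fun a : S => lTrans a (0 : S →ᵇ ℂ)
    have h : (fun a : S => lTrans a (0 : S →ᵇ ℂ)) = fun _ => (0 : S →ᵇ ℂ) := by
      funext a; ext x; simp [lTrans]
    rw [h]; exact continuous_const
  smul_mem' := by
    intro c f hf
    show Continuous fun a : S => lTrans a (c • f)
    have h : (fun a : S => lTrans a (c • f)) = fun a : S => c • lTrans a f := by
      funext a; ext x; simp [lTrans]
    rw [h]; exact hf.const_smul c

/-- The left translate `δ_a * f` of an element of `LUC S`, as an element of `LUC S`. -/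
noncomputable def lTransL {S : Type*} [Semigroup S] [MetricSpace S] [ContinuousMul S]
    (a : S) (f : LUC S) : LUC S :=
  ⟨lTrans a f.1, by
    show Continuous fun b : S => lTrans b (lTrans a f.1)
    have h : (fun b : S => lTrans b (lTrans a f.1)) = fun b : S => lTrans (a * b) f.1 := by
      funext b; ext x; simp [lTrans, mul_assoc]
    rw [h]; exact f.2.comp (continuous_mul_left a)⟩


section AuxBasic
variable {S : Type*} [Semigroup S] [MetricSpace S] [ContinuousMul S]

@[simp] lemma lTrans_apply (a : S) (f : S →ᵇ ℂ) (x : S) : lTrans a f x = f (a * x) := rfl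

lemma norm_lTrans_le (a : S) (f : S →ᵇ ℂ) : ‖lTrans a f‖ ≤ ‖f‖ := by
  refine (norm_le (norm_nonneg f)).2 fun x => ?_
  exact f.norm_coe_le_norm (a * x)

lemma lTrans_sub (a : S) (f g : S →ᵇ ℂ) : lTrans a (f - g) = lTrans a f - lTrans a g := by
  ext x; simp [lTrans]

lemma lipschitz_lTrans (a : S) : LipschitzWith 1 (fun f : S →ᵇ ℂ => lTrans a f) := by
  intro f g
  rw [edist_eq_enorm_sub, edist_eq_enorm_sub, ← lTrans_sub, ENNReal.coe_one, one_mul]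
  exact ENNReal.coe_le_coe.2 (show ‖lTrans a (f - g)‖₊ ≤ ‖f - g‖₊ from norm_lTrans_le a _)

lemma mem_LUC_iff {f : S →ᵇ ℂ} : f ∈ LUC S ↔ Continuous fun a : S => lTrans a f := Iff.rfl

set_option synthInstance.maxHeartbeats 1000000 in
lemma isClosed_LUC : IsClosed ((LUC S : Submodule ℂ (S →ᵇ ℂ)) : Set (S →ᵇ ℂ)) := by
  haveI : SequentialSpace (S →ᵇ ℂ) := FrechetUrysohnSpace.to_sequentialSpace
  rw [← isSeqClosed_iff_isClosed]
  intro u f hu hf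
  show Continuous fun a : S => lTrans a f
  have hU : TendstoUniformly (fun n a => lTrans a (u n)) (fun a => lTrans a f) atTop := by
    rw [Metric.tendstoUniformly_iff]
    intro ε hε
    filter_upwards [(Metric.tendsto_nhds.1 hf) ε hε] with n hn a
    calc dist (lTrans a f) (lTrans a (u n)) ≤ 1 * dist f (u n) :=
          (lipschitz_lTrans a).dist_le_mul _ _
      _ < ε := by rw [one_mul, dist_comm]; exact hn
  exact hU.continuous (Frequently.of_forall fun n => hu n)

noncomputable instance : CompleteSpace (LUC S) := isClosed_LUC.completeSpace_coe

@[simp] lemma LUC_norm_def (f : LUC S) : ‖f‖ = ‖(f : S →ᵇ ℂ)‖ := rfl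

@[simp] lemma lTransL_coe (a : S) (f : LUC S) :
    ((lTransL a f : LUC S) : S →ᵇ ℂ) = lTrans a (f : S →ᵇ ℂ) := rfl

lemma norm_lTransL_le (a : S) (f : LUC S) : ‖lTransL a f‖ ≤ ‖f‖ := norm_lTrans_le a f.1

lemma lTransL_comp (a c : S) (f : LUC S) : lTransL c (lTransL a f) = lTransL (a * c) f := by
  apply Subtype.ext; ext x; simp [lTransL, lTrans, mul_assoc]

lemma lTransL_add (a : S) (f g : LUC S) :
    lTransL a (f + g) = lTransL a f + lTransL a g := by
  apply Subtype.ext; ext x; simp [lTransL, lTrans]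

lemma lTransL_smul (a : S) (c : ℂ) (f : LUC S) :
    lTransL a (c • f) = c • lTransL a f := by
  apply Subtype.ext; ext x; simp [lTransL, lTrans]

lemma lTransL_sub (a : S) (f g : LUC S) :
    lTransL a (f - g) = lTransL a f - lTransL a g := by
  apply Subtype.ext; ext x; simp [lTransL, lTrans]

lemma continuous_lTransL (f : LUC S) : Continuous fun a : S => lTransL a f :=
  Continuous.subtype_mk f.2 _

lemma one_mem_LUC : (1 : S →ᵇ ℂ) ∈ LUC S := by
  show Continuous fun a : S => lTrans a (1 : S →ᵇ ℂ)
  have h : (fun a : S => lTrans a (1 : S →ᵇ ℂ)) = fun _ => (1 : S →ᵇ ℂ) := by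
    funext a; ext x; simp [lTrans]
  rw [h]; exact continuous_const

noncomputable def oneL : LUC S := ⟨1, one_mem_LUC⟩

lemma lTransL_oneL (a : S) : lTransL a (oneL : LUC S) = oneL := by
  apply Subtype.ext; ext x; simp [lTransL, lTrans, oneL]

noncomputable def evCLM (z : S) : LUC S →L[ℂ] ℂ :=
  LinearMap.mkContinuous
    { toFun := fun f : LUC S => (f : S →ᵇ ℂ) z
      map_add' := fun f g => rfl
      map_smul' := fun c f => rfl } 1
    (fun f => by rw [one_mul]; exact (f : S →ᵇ ℂ).norm_coe_le_norm z)

@[simp] lemma evCLM_apply (z : S) (f : LUC S) : evCLM z f = (f : S →ᵇ ℂ) z := rfl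

end AuxBasic

section AuxMeasure
variable {S : Type*} [Semigroup S] [MetricSpace S] [ContinuousMul S]
  [MeasurableSpace S] [BorelSpace S] (π : Measure S) [IsProbabilityMeasure π]

set_option linter.unusedSectionVars false

lemma integrable_comp_cont (g : S →ᵇ ℂ) {h : S → S} (hc : Continuous h) :
    Integrable (fun y => g (h y)) π := by
  refine (integrable_const (‖g‖ : ℝ)).mono' ((g.continuous.comp hc).aestronglyMeasurable) ?_
  exact Eventually.of_forall fun y => g.norm_coe_le_norm (h y)

noncomputable def Qb (g : S →ᵇ ℂ) : S →ᵇ ℂ :=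
  BoundedContinuousFunction.ofNormedAddCommGroup (fun z => ∫ y, g (y * z) ∂π)
    (by
      haveI : SequentialSpace S := FrechetUrysohnSpace.to_sequentialSpace
      refine continuous_iff_seqContinuous.2 fun u z hu => ?_
      refine tendsto_integral_of_dominated_convergence (fun _ => ‖g‖)
        (fun n => ((g.continuous.comp (continuous_id.mul continuous_const)).aestronglyMeasurable))
        (integrable_const _) (fun n => Eventually.of_forall fun y => g.norm_coe_le_norm _) ?_
      refine Eventually.of_forall fun y => ?_
      exact (g.continuous.comp (continuous_const.mul continuous_id)).continuousAt.tendsto.comp hu)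
    ‖g‖
    (fun z => by
      calc ‖∫ y, g (y * z) ∂π‖ ≤ ‖g‖ * (π Set.univ).toReal :=
            norm_integral_le_of_norm_le_const (Eventually.of_forall fun y => g.norm_coe_le_norm _)
        _ = ‖g‖ := by simp)

@[simp] lemma Qb_apply (g : S →ᵇ ℂ) (z : S) : Qb π g z = ∫ y, g (y * z) ∂π := rfl

lemma norm_Qb_le (g : S →ᵇ ℂ) : ‖Qb π g‖ ≤ ‖g‖ := by
  refine (norm_le (norm_nonneg g)).2 fun z => ?_
  calc ‖∫ y, g (y * z) ∂π‖ ≤ ‖g‖ * (π Set.univ).toReal :=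
        norm_integral_le_of_norm_le_const (Eventually.of_forall fun y => g.norm_coe_le_norm _)
    _ = ‖g‖ := by simp

lemma Qb_add (f g : S →ᵇ ℂ) : Qb π (f + g) = Qb π f + Qb π g := by
  ext z
  simp only [Qb_apply, BoundedContinuousFunction.coe_add, Pi.add_apply]
  exact integral_add (integrable_comp_cont π f (continuous_id.mul continuous_const))
    (integrable_comp_cont π g (continuous_id.mul continuous_const))

lemma Qb_smul (c : ℂ) (f : S →ᵇ ℂ) : Qb π (c • f) = c • Qb π f := by
  ext z
  simp only [Qb_apply, BoundedContinuousFunction.coe_smul, Pi.smul_apply, smul_eq_mul]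
  exact integral_const_mul c _

lemma Qb_one : Qb π (1 : S →ᵇ ℂ) = 1 := by
  ext z; simp

lemma Qb_nonneg (f : S →ᵇ ℂ) (hf : ∀ x : S, ∃ r : ℝ, 0 ≤ r ∧ f x = r) (z : S) :
    ∃ r : ℝ, 0 ≤ r ∧ Qb π f z = r := by
  refine ⟨∫ y, (f (y * z)).re ∂π, integral_nonneg fun y => ?_, ?_⟩
  · obtain ⟨r, hr, he⟩ := hf (y * z)
    simp [he, hr]
  · have hrw : (fun y => f (y * z)) = fun y => (((f (y * z)).re : ℝ) : ℂ) := by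
      funext y
      obtain ⟨r, hr, he⟩ := hf (y * z)
      simp [he]
    rw [Qb_apply, hrw]
    exact integral_ofReal (𝕜 := ℂ)

lemma ltrans_norm_fun_continuous {g : S →ᵇ ℂ} (hg : Continuous fun a : S => lTrans a g)
    (c d : S) : Continuous fun y : S => ‖lTrans (y * c) g - lTrans (y * d) g‖ :=
  ((hg.comp (continuous_id.mul continuous_const)).sub
    (hg.comp (continuous_id.mul continuous_const))).norm

lemma integrable_ltrans_norm {g : S →ᵇ ℂ} (hg : Continuous fun a : S => lTrans a g)
    (c d : S) : Integrable (fun y : S => ‖lTrans (y * c) g - lTrans (y * d) g‖) π := by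
  refine (integrable_const (2 * ‖g‖)).mono'
    (ltrans_norm_fun_continuous hg c d).aestronglyMeasurable
    (Eventually.of_forall fun y => ?_)
  rw [norm_norm]
  calc ‖lTrans (y * c) g - lTrans (y * d) g‖
      ≤ ‖lTrans (y * c) g‖ + ‖lTrans (y * d) g‖ := norm_sub_le _ _
    _ ≤ ‖g‖ + ‖g‖ := add_le_add (norm_lTrans_le _ _) (norm_lTrans_le _ _)
    _ = 2 * ‖g‖ := by ring

lemma lTrans_Qb_dist_le {g : S →ᵇ ℂ} (hg : Continuous fun a : S => lTrans a g) (a b : S) :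
    dist (lTrans a (Qb π g)) (lTrans b (Qb π g))
      ≤ ∫ y, ‖lTrans (y * a) g - lTrans (y * b) g‖ ∂π := by
  have hInonneg : (0:ℝ) ≤ ∫ y, ‖lTrans (y * a) g - lTrans (y * b) g‖ ∂π :=
    integral_nonneg fun y => norm_nonneg _
  rw [dist_eq_norm]
  refine (norm_le hInonneg).2 fun x => ?_
  have hint1 : Integrable (fun y => g (y * (a * x))) π :=
    integrable_comp_cont π g (continuous_id.mul continuous_const)
  have hint2 : Integrable (fun y => g (y * (b * x))) π :=
    integrable_comp_cont π g (continuous_id.mul continuous_const)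
  have h1 : (lTrans a (Qb π g) - lTrans b (Qb π g)) x
      = ∫ y, (g (y * (a * x)) - g (y * (b * x))) ∂π := by
    simp only [BoundedContinuousFunction.coe_sub, Pi.sub_apply, lTrans_apply, Qb_apply]
    exact (integral_sub hint1 hint2).symm
  rw [h1]
  have hnormint : Integrable (fun y => ‖g (y * (a * x)) - g (y * (b * x))‖) π :=
    (hint1.sub hint2).norm
  calc ‖∫ y, (g (y * (a * x)) - g (y * (b * x))) ∂π‖
      ≤ ∫ y, ‖g (y * (a * x)) - g (y * (b * x))‖ ∂π := norm_integral_le_integral_norm _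
    _ ≤ ∫ y, ‖lTrans (y * a) g - lTrans (y * b) g‖ ∂π := by
        refine integral_mono hnormint (integrable_ltrans_norm π hg a b) fun y => ?_
        have h2 : g (y * (a * x)) - g (y * (b * x))
            = (lTrans (y * a) g - lTrans (y * b) g) x := by
          simp [lTrans_apply, mul_assoc]
        rw [h2]
        exact BoundedContinuousFunction.norm_coe_le_norm _ x

lemma Qb_mem_LUC {g : S →ᵇ ℂ} (hg : Continuous fun a : S => lTrans a g) :
    Continuous fun a : S => lTrans a (Qb π g) := by
  haveI : SequentialSpace S := FrechetUrysohnSpace.to_sequentialSpace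
  refine continuous_iff_seqContinuous.2 fun u b hu => ?_
  rw [tendsto_iff_dist_tendsto_zero]
  have hI : Tendsto (fun n => ∫ y, ‖lTrans (y * u n) g - lTrans (y * b) g‖ ∂π) atTop (𝓝 0) := by
    have h0 : Tendsto (fun n => ∫ y, ‖lTrans (y * u n) g - lTrans (y * b) g‖ ∂π) atTop
        (𝓝 (∫ (_ : S), (0:ℝ) ∂π)) := by
      refine tendsto_integral_of_dominated_convergence (fun _ => 2 * ‖g‖)
        (fun n => (ltrans_norm_fun_continuous hg (u n) b).aestronglyMeasurable)
        (integrable_const _) (fun n => Eventually.of_forall fun y => ?_)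
        (Eventually.of_forall fun y => ?_)
      · rw [norm_norm]
        calc ‖lTrans (y * u n) g - lTrans (y * b) g‖
            ≤ ‖lTrans (y * u n) g‖ + ‖lTrans (y * b) g‖ := norm_sub_le _ _
          _ ≤ ‖g‖ + ‖g‖ := add_le_add (norm_lTrans_le _ _) (norm_lTrans_le _ _)
          _ = 2 * ‖g‖ := by ring
      · have hmul : Tendsto (fun n => y * u n) atTop (𝓝 (y * b)) :=
          ((continuous_mul_left y).tendsto b).comp hu
        have hcont : Tendsto (fun c => ‖lTrans c g - lTrans (y * b) g‖) (𝓝 (y * b))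
            (𝓝 ‖lTrans (y * b) g - lTrans (y * b) g‖) :=
          ((hg.sub continuous_const).norm.tendsto (y * b))
        simpa [Function.comp_def] using hcont.comp hmul
    simpa using h0
  exact squeeze_zero (fun n => dist_nonneg) (fun n => lTrans_Qb_dist_le π hg (u n) b) hI

noncomputable def QL (f : LUC S) : LUC S := ⟨Qb π f.1, Qb_mem_LUC π f.2⟩

@[simp] lemma QL_coe (f : LUC S) : ((QL π f : LUC S) : S →ᵇ ℂ) = Qb π f.1 := rfl

lemma norm_QL_le (f : LUC S) : ‖QL π f‖ ≤ ‖f‖ := norm_Qb_le π f.1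

lemma QL_add (f g : LUC S) : QL π (f + g) = QL π f + QL π g := by
  apply Subtype.ext
  show Qb π (f.1 + g.1) = Qb π f.1 + Qb π g.1
  exact Qb_add π f.1 g.1

lemma QL_smul (c : ℂ) (f : LUC S) : QL π (c • f) = c • QL π f := by
  apply Subtype.ext
  show Qb π (c • f.1) = c • Qb π f.1
  exact Qb_smul π c f.1

lemma norm_QL_iter_le (k : ℕ) (f : LUC S) : ‖(QL π)^[k] f‖ ≤ ‖f‖ := by
  induction k generalizing f with
  | zero => exact le_rfl
  | succ k ih =>
    rw [Function.iterate_succ_apply]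
    exact le_trans (ih (QL π f)) (norm_QL_le π f)

lemma QL_iter_add (k : ℕ) (f g : LUC S) :
    (QL π)^[k] (f + g) = (QL π)^[k] f + (QL π)^[k] g := by
  induction k generalizing f g with
  | zero => simp
  | succ k ih =>
    rw [Function.iterate_succ_apply, Function.iterate_succ_apply, Function.iterate_succ_apply,
      QL_add, ih]

lemma QL_iter_smul (k : ℕ) (c : ℂ) (f : LUC S) :
    (QL π)^[k] (c • f) = c • (QL π)^[k] f := by
  induction k generalizing f with
  | zero => simp
  | succ k ih =>
    rw [Function.iterate_succ_apply, Function.iterate_succ_apply, QL_smul, ih]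

lemma QL_iter_nonneg (k : ℕ) (f : LUC S) (hf : ∀ x : S, ∃ r : ℝ, 0 ≤ r ∧ f.1 x = r) :
    ∀ x : S, ∃ r : ℝ, 0 ≤ r ∧ ((QL π)^[k] f).1 x = r := by
  induction k generalizing f with
  | zero => simpa using hf
  | succ k ih =>
    rw [Function.iterate_succ_apply]
    exact ih (QL π f) (Qb_nonneg π f.1 hf)

variable (x₀ : S)

noncomputable def cesaro (f : LUC S) (n : ℕ) : ℂ :=
  ((n : ℂ) + 1)⁻¹ * ∑ k ∈ Finset.range (n + 1), ((QL π)^[k] f).1 x₀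

lemma norm_cesaro_le (f : LUC S) (n : ℕ) : ‖cesaro π x₀ f n‖ ≤ ‖f‖ := by
  have h1 : ‖∑ k ∈ Finset.range (n + 1), ((QL π)^[k] f).1 x₀‖ ≤ (n + 1 : ℝ) * ‖f‖ := by
    calc ‖∑ k ∈ Finset.range (n + 1), ((QL π)^[k] f).1 x₀‖
        ≤ ∑ k ∈ Finset.range (n + 1), ‖((QL π)^[k] f).1 x₀‖ := norm_sum_le _ _
      _ ≤ ∑ _k ∈ Finset.range (n + 1), ‖f‖ := by
          refine Finset.sum_le_sum fun k _ => ?_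
          exact le_trans (BoundedContinuousFunction.norm_coe_le_norm _ x₀) (norm_QL_iter_le π k f)
      _ = (n + 1 : ℝ) * ‖f‖ := by
          rw [Finset.sum_const, Finset.card_range, nsmul_eq_mul]; push_cast; ring
  have h2 : ‖((n : ℂ) + 1)⁻¹‖ = ((n : ℝ) + 1)⁻¹ := by
    rw [norm_inv]
    norm_cast
  rw [cesaro, norm_mul, h2]
  rw [inv_mul_le_iff₀ (by positivity)]
  calc ‖∑ k ∈ Finset.range (n + 1), ((QL π)^[k] f).1 x₀‖ ≤ (n + 1 : ℝ) * ‖f‖ := h1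
    _ = ((n : ℝ) + 1) * ‖f‖ := rfl
  
lemma cesaro_add (f g : LUC S) (n : ℕ) :
    cesaro π x₀ (f + g) n = cesaro π x₀ f n + cesaro π x₀ g n := by
  simp only [cesaro, QL_iter_add]
  rw [← mul_add, ← Finset.sum_add_distrib]
  rfl

lemma cesaro_smul (c : ℂ) (f : LUC S) (n : ℕ) :
    cesaro π x₀ (c • f) n = c * cesaro π x₀ f n := by
  simp only [cesaro, QL_iter_smul, Submodule.coe_smul, BoundedContinuousFunction.coe_smul,
    Pi.smul_apply, smul_eq_mul]
  rw [← Finset.mul_sum]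
  ring

lemma cesaro_QL (f : LUC S) (n : ℕ) :
    cesaro π x₀ (QL π f) n
      = cesaro π x₀ f n + ((n : ℂ) + 1)⁻¹ * (((QL π)^[n+1] f).1 x₀ - f.1 x₀) := by
  have h : ∑ k ∈ Finset.range (n + 1), ((QL π)^[k] (QL π f)).1 x₀
      = (∑ k ∈ Finset.range (n + 1), ((QL π)^[k] f).1 x₀)
        + (((QL π)^[n+1] f).1 x₀ - f.1 x₀) := by
    have e1 : ∀ k, ((QL π)^[k] (QL π f)) = ((QL π)^[k+1] f) := by
      intro k; rw [Function.iterate_succ_apply]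
    simp only [e1]
    have h1 := Finset.sum_range_succ' (fun k => ((QL π)^[k] f).1 x₀) (n+1)
    have h2 := Finset.sum_range_succ (fun k => ((QL π)^[k] f).1 x₀) (n+1)
    simp only [Function.iterate_zero_apply] at h1 h2 ⊢
    linear_combination h2 - h1
  rw [cesaro, h, mul_add, ← cesaro]

lemma QL_one : QL π (oneL : LUC S) = oneL := by
  apply Subtype.ext
  exact Qb_one π

lemma QL_iter_one (k : ℕ) : (QL π)^[k] (oneL : LUC S) = oneL := by
  induction k with
  | zero => simp
  | succ k ih => rw [Function.iterate_succ_apply, QL_one, ih]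

lemma cesaro_one (n : ℕ) : cesaro π x₀ (oneL : LUC S) n = 1 := by
  have h1 : ∀ k, ((QL π)^[k] (oneL : LUC S)).1 x₀ = 1 := by
    intro k; rw [QL_iter_one]; rfl
  simp only [cesaro, h1, Finset.sum_const, Finset.card_range, nsmul_eq_mul, mul_one]
  have hne : ((n : ℂ) + 1) ≠ 0 := Nat.cast_add_one_ne_zero n
  rw [show ((n + 1 : ℕ) : ℂ) = (n : ℂ) + 1 by push_cast; ring, inv_mul_cancel₀ hne]

noncomputable def UF : Ultrafilter ℕ := Ultrafilter.of atTop

lemma UF_le_atTop : (UF : Filter ℕ) ≤ atTop := Ultrafilter.of_le _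

lemma exists_mean_lim (f : LUC S) :
    ∃ L : ℂ, Tendsto (cesaro π x₀ f) (UF : Filter ℕ) (𝓝 L) := by
  have hmem : Metric.closedBall (0:ℂ) ‖f‖ ∈ Ultrafilter.map (cesaro π x₀ f) UF := by
    rw [Ultrafilter.mem_map]
    refine Filter.univ_mem' fun n => ?_
    simp only [Set.mem_preimage, Metric.mem_closedBall, dist_zero_right]
    exact norm_cesaro_le π x₀ f n
  obtain ⟨L, _, hL⟩ := (isCompact_closedBall (0:ℂ) ‖f‖).ultrafilter_le_nhds
    (Ultrafilter.map (cesaro π x₀ f) UF) (le_principal_iff.2 hmem)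
  exact ⟨L, hL⟩

noncomputable def mMean (f : LUC S) : ℂ := (exists_mean_lim π x₀ f).choose

lemma tendsto_mMean (f : LUC S) :
    Tendsto (cesaro π x₀ f) (UF : Filter ℕ) (𝓝 (mMean π x₀ f)) :=
  (exists_mean_lim π x₀ f).choose_spec

lemma mMean_eq_of_tendsto {f : LUC S} {L : ℂ}
    (h : Tendsto (cesaro π x₀ f) (UF : Filter ℕ) (𝓝 L)) : mMean π x₀ f = L :=
  tendsto_nhds_unique (tendsto_mMean π x₀ f) h

lemma mMean_add (f g : LUC S) : mMean π x₀ (f + g) = mMean π x₀ f + mMean π x₀ g := by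
  refine mMean_eq_of_tendsto π x₀ ?_
  have h := (tendsto_mMean π x₀ f).add (tendsto_mMean π x₀ g)
  have he : (fun n => cesaro π x₀ f n + cesaro π x₀ g n) = cesaro π x₀ (f + g) := by
    funext n; rw [cesaro_add]
  rwa [he] at h

lemma mMean_smul (c : ℂ) (f : LUC S) : mMean π x₀ (c • f) = c * mMean π x₀ f := by
  refine mMean_eq_of_tendsto π x₀ ?_
  have h := (tendsto_mMean π x₀ f).const_mul c
  have he : (fun n => c * cesaro π x₀ f n) = cesaro π x₀ (c • f) := by
    funext n; rw [cesaro_smul]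
  rwa [he] at h

lemma norm_mMean_le (f : LUC S) : ‖mMean π x₀ f‖ ≤ ‖f‖ :=
  le_of_tendsto (tendsto_mMean π x₀ f).norm
    (Eventually.of_forall fun n => norm_cesaro_le π x₀ f n)

lemma mMean_one : mMean π x₀ (oneL : LUC S) = 1 := by
  refine mMean_eq_of_tendsto π x₀ ?_
  have he : cesaro π x₀ (oneL : LUC S) = fun _ => (1:ℂ) := funext fun n => cesaro_one π x₀ n
  rw [he]; exact tendsto_const_nhds

lemma mMean_QL (f : LUC S) : mMean π x₀ (QL π f) = mMean π x₀ f := by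
  refine mMean_eq_of_tendsto π x₀ ?_
  have hε : Tendsto (fun n : ℕ => ((n : ℂ) + 1)⁻¹ * (((QL π)^[n+1] f).1 x₀ - f.1 x₀))
      (UF : Filter ℕ) (𝓝 0) := by
    refine Tendsto.mono_left ?_ (UF_le_atTop)
    refine squeeze_zero_norm (a := fun n : ℕ => (1 / ((n:ℝ) + 1)) * (2 * ‖f‖)) (fun n => ?_) ?_
    · show ‖((n : ℂ) + 1)⁻¹ * (((QL π)^[n+1] f).1 x₀ - f.1 x₀)‖ ≤ (1 / ((n:ℝ) + 1)) * (2 * ‖f‖)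
      rw [norm_mul]
      have h2 : ‖((n : ℂ) + 1)⁻¹‖ = 1 / ((n : ℝ) + 1) := by
        rw [norm_inv, one_div]
        congr 1
        have hcast : ((n : ℂ) + 1) = ((((n : ℝ) + 1) : ℝ) : ℂ) := by push_cast; ring
        rw [hcast, Complex.norm_real, Real.norm_eq_abs, abs_of_pos (by positivity)]
      rw [h2]
      refine mul_le_mul_of_nonneg_left ?_ (by positivity)
      calc ‖((QL π)^[n+1] f).1 x₀ - f.1 x₀‖
          ≤ ‖((QL π)^[n+1] f).1 x₀‖ + ‖f.1 x₀‖ := norm_sub_le _ _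
        _ ≤ ‖f‖ + ‖f‖ := add_le_add
            (le_trans (BoundedContinuousFunction.norm_coe_le_norm _ x₀) (norm_QL_iter_le π _ f))
            (BoundedContinuousFunction.norm_coe_le_norm _ x₀)
        _ = 2 * ‖f‖ := by ring
    · have := tendsto_one_div_add_atTop_nhds_zero_nat.mul_const (2 * ‖f‖)
      rw [zero_mul] at this; exact this
  have h := (tendsto_mMean π x₀ f).add hε
  rw [add_zero] at h
  have he : (fun n => cesaro π x₀ f n + ((n : ℂ) + 1)⁻¹ * (((QL π)^[n+1] f).1 x₀ - f.1 x₀))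
      = cesaro π x₀ (QL π f) := by
    funext n; rw [cesaro_QL]
  rwa [he] at h

lemma mMean_nonneg (f : LUC S) (hf : ∀ x : S, ∃ r : ℝ, 0 ≤ r ∧ f.1 x = r) :
    ∃ r : ℝ, 0 ≤ r ∧ mMean π x₀ f = r := by
  have hC : IsClosed {z : ℂ | 0 ≤ z.re ∧ z.im = 0} :=
    (isClosed_le continuous_const Complex.continuous_re).inter
      (isClosed_eq Complex.continuous_im continuous_const)
  have hmem : ∀ n, cesaro π x₀ f n ∈ {z : ℂ | 0 ≤ z.re ∧ z.im = 0} := by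
    intro n
    have hterm : ∀ k, ∃ r : ℝ, 0 ≤ r ∧ ((QL π)^[k] f).1 x₀ = r := fun k =>
      QL_iter_nonneg π k f hf x₀
    choose r hr he using hterm
    have hsum : ∑ k ∈ Finset.range (n + 1), ((QL π)^[k] f).1 x₀
        = ((∑ k ∈ Finset.range (n + 1), r k : ℝ) : ℂ) := by
      rw [Complex.ofReal_sum]
      exact Finset.sum_congr rfl fun k _ => he k
    have hinv : ((n : ℂ) + 1)⁻¹ = (((1 / ((n:ℝ) + 1)) : ℝ) : ℂ) := by
      push_cast; rw [one_div]
    rw [cesaro, hsum, hinv, ← Complex.ofReal_mul]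
    constructor
    · simp only [Complex.ofReal_re]
      exact mul_nonneg (by positivity) (Finset.sum_nonneg fun k _ => hr k)
    · simp
  have hmemL : mMean π x₀ f ∈ {z : ℂ | 0 ≤ z.re ∧ z.im = 0} :=
    hC.mem_of_tendsto (tendsto_mMean π x₀ f) (Eventually.of_forall hmem)
  refine ⟨(mMean π x₀ f).re, hmemL.1, ?_⟩
  apply Complex.ext
  · simp
  · simp [hmemL.2]

lemma exists_sigmaCompact_full
    (htight : ∀ ε : ℝ≥0∞, 0 < ε → ∃ K : Set S, IsCompact K ∧ π Kᶜ < ε) :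
    ∃ T : ℕ → Set S, (∀ n, IsCompact (T n)) ∧ π (⋃ n, T n)ᶜ = 0 := by
  have h : ∀ n : ℕ, ∃ K : Set S, IsCompact K ∧ π Kᶜ < (n + 1 : ℝ≥0∞)⁻¹ := by
    intro n
    refine htight _ (ENNReal.inv_pos.2 ?_)
    exact ENNReal.add_ne_top.2 ⟨ENNReal.natCast_ne_top n, ENNReal.one_ne_top⟩
  choose T hTc hTm using h
  refine ⟨T, hTc, ?_⟩
  have hle : ∀ n : ℕ, π (⋃ m, T m)ᶜ ≤ (n + 1 : ℝ≥0∞)⁻¹ := by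
    intro n
    refine le_trans (measure_mono ?_) (hTm n).le
    rw [Set.compl_subset_compl]
    exact Set.subset_iUnion T n
  by_contra hne
  obtain ⟨n, hn⟩ := ENNReal.exists_inv_nat_lt hne
  have h2 : ((n : ℝ≥0∞) + 1)⁻¹ ≤ (n : ℝ≥0∞)⁻¹ := by
    gcongr
    exact le_self_add
  exact absurd ((hle n).trans h2) (not_le.2 hn)

lemma integrable_lTransL_comp
    (htight : ∀ ε : ℝ≥0∞, 0 < ε → ∃ K : Set S, IsCompact K ∧ π Kᶜ < ε)
    (f : LUC S) {h : S → S} (hc : Continuous h) :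
    Integrable (fun y : S => lTransL (h y) f) π := by
  obtain ⟨T, hTc, hT0⟩ := exists_sigmaCompact_full π htight
  set G : S → LUC S := fun y => lTransL (h y) f with hG
  have hGcont : Continuous G := (continuous_lTransL f).comp hc
  set Tu : Set S := ⋃ n, T n with hTu
  have hTum : MeasurableSet Tu :=
    MeasurableSet.iUnion fun n => (hTc n).isClosed.measurableSet
  letI : MeasurableSpace (LUC S) := borel _
  haveI : BorelSpace (LUC S) := ⟨rfl⟩
  have hsm : StronglyMeasurable (Tu.indicator G) := by
    rw [stronglyMeasurable_iff_measurable_separable]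
    constructor
    · exact hGcont.measurable.indicator hTum
    · have hsep : TopologicalSpace.IsSeparable
          ((⋃ n, G '' T n) ∪ {(0 : LUC S)}) :=
        (TopologicalSpace.IsSeparable.iUnion
          (fun n : ℕ => ((hTc n).image hGcont).isSeparable)).union
          ((Set.finite_singleton (0 : LUC S)).isSeparable)
      refine hsep.mono ?_
      rintro z ⟨y, rfl⟩
      by_cases hy : y ∈ Tu
      · left
        rw [Set.indicator_of_mem hy]
        obtain ⟨n, hn⟩ := Set.mem_iUnion.1 hy
        exact Set.mem_iUnion.2 ⟨n, ⟨y, hn, rfl⟩⟩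
      · right
        rw [Set.indicator_of_notMem hy]
        simp
  have hae : (fun y => lTransL (h y) f) =ᵐ[π] Tu.indicator G := by
    have hmem : Tu ∈ ae π := by rw [mem_ae_iff]; exact hT0
    exact Filter.eventuallyEq_of_mem hmem fun y hy => (Set.indicator_of_mem hy G).symm
  refine ⟨⟨Tu.indicator G, hsm, hae⟩, ?_⟩
  refine HasFiniteIntegral.mono' (g := fun _ => ‖f‖) (hasFiniteIntegral_const ‖f‖)
    (Eventually.of_forall fun y => ?_)
  exact norm_lTrans_le (h y) f.1

end AuxMeasure

section AuxFinal
variable {S : Type*} [Semigroup S] [MetricSpace S] [ContinuousMul S]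
  [MeasurableSpace S] [BorelSpace S] (π : Measure S) [IsProbabilityMeasure π] (x₀ : S)

set_option linter.unusedSectionVars false

noncomputable def mMeanCLM : LUC S →L[ℂ] ℂ :=
  LinearMap.mkContinuous
    { toFun := mMean π x₀
      map_add' := mMean_add π x₀
      map_smul' := fun c f => by simpa using mMean_smul π x₀ c f } 1
    (fun f => by rw [one_mul]; exact norm_mMean_le π x₀ f)

@[simp] lemma mMeanCLM_apply (f : LUC S) : mMeanCLM π x₀ f = mMean π x₀ f := rfl

lemma integral_lTransL
    (htight : ∀ ε : ℝ≥0∞, 0 < ε → ∃ K : Set S, IsCompact K ∧ π Kᶜ < ε)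
    (f : LUC S) (x : S) :
    ∫ y, lTransL (x * y) f ∂π = QL π (lTransL x f) := by
  have hint : Integrable (fun y : S => lTransL (x * y) f) π :=
    integrable_lTransL_comp π htight f (continuous_const.mul continuous_id)
  apply Subtype.ext
  ext z
  have h1 : ((∫ y, lTransL (x * y) f ∂π : LUC S) : S →ᵇ ℂ) z
      = ∫ y, (f : S →ᵇ ℂ) ((x * y) * z) ∂π := by
    have h := (evCLM z).integral_comp_comm hint
    have h2 : (fun y => evCLM z (lTransL (x * y) f))
        = fun y => (f : S →ᵇ ℂ) ((x * y) * z) := by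
      funext y; rfl
    rw [h2] at h
    exact h.symm
  have h2 : ((QL π (lTransL x f) : LUC S) : S →ᵇ ℂ) z
      = ∫ y, (f : S →ᵇ ℂ) (x * (y * z)) ∂π := by
    show Qb π (lTrans x (f : S →ᵇ ℂ)) z = _
    rw [Qb_apply]
    rfl
  rw [h1, h2]
  congr 1
  funext y
  rw [mul_assoc]

noncomputable def harmF (f : LUC S) : S →ᵇ ℂ :=
  BoundedContinuousFunction.ofNormedAddCommGroup (fun x => mMean π x₀ (lTransL x f))
    ((mMeanCLM π x₀).continuous.comp (continuous_lTransL f)) ‖f‖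
    (fun x => le_trans (norm_mMean_le π x₀ _) (norm_lTransL_le x f))

@[simp] lemma harmF_apply (f : LUC S) (x : S) :
    harmF π x₀ f x = mMean π x₀ (lTransL x f) := rfl

lemma mMean_sub (f g : LUC S) : mMean π x₀ (f - g) = mMean π x₀ f - mMean π x₀ g := by
  have := (mMeanCLM π x₀).map_sub f g
  simpa using this

lemma dist_harmF_le (f g : LUC S) :
    dist (harmF π x₀ f) (harmF π x₀ g) ≤ dist f g := by
  rw [dist_eq_norm, dist_eq_norm]
  refine (norm_le (by positivity)).2 fun x => ?_
  have h1 : (harmF π x₀ f - harmF π x₀ g) x = mMean π x₀ (lTransL x f - lTransL x g) := by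
    rw [mMean_sub]
    rfl
  rw [h1, ← lTransL_sub]
  exact le_trans (norm_mMean_le π x₀ _) (norm_lTransL_le x (f - g))

lemma harmF_mem_LUC (f : LUC S) : harmF π x₀ f ∈ LUC S := by
  show Continuous fun a : S => lTrans a (harmF π x₀ f)
  have he : (fun a : S => lTrans a (harmF π x₀ f))
      = fun a : S => harmF π x₀ (lTransL a f) := by
    funext a; ext x
    simp only [lTrans_apply, harmF_apply]
    rw [lTransL_comp]
  rw [he]
  have hlip : LipschitzWith 1 (fun g : LUC S => harmF π x₀ g) :=
    LipschitzWith.of_dist_le_mul fun g h => by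
      rw [NNReal.coe_one, one_mul]; exact dist_harmF_le π x₀ g h
  exact hlip.continuous.comp (continuous_lTransL f)

lemma harmF_harmonic
    (htight : ∀ ε : ℝ≥0∞, 0 < ε → ∃ K : Set S, IsCompact K ∧ π Kᶜ < ε)
    (f : LUC S) (x : S) :
    ∫ y, harmF π x₀ f (x * y) ∂π = harmF π x₀ f x := by
  have hint : Integrable (fun y : S => lTransL (x * y) f) π :=
    integrable_lTransL_comp π htight f (continuous_const.mul continuous_id)
  calc ∫ y, harmF π x₀ f (x * y) ∂π
      = ∫ y, mMeanCLM π x₀ (lTransL (x * y) f) ∂π := rfl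
    _ = mMeanCLM π x₀ (∫ y, lTransL (x * y) f ∂π) :=
        (mMeanCLM π x₀).integral_comp_comm hint
    _ = mMeanCLM π x₀ (QL π (lTransL x f)) := by rw [integral_lTransL π htight f x]
    _ = mMean π x₀ (lTransL x f) := mMean_QL π x₀ (lTransL x f)
    _ = harmF π x₀ f x := rfl

end AuxFinal

/-- **Liouville property implies amenability for metric semigroups.**
If `S` is a metric semigroup and `π` is a tight Borel probability measure on `S` such that
every `π`-harmonic function in `LUC S` is constant, then `S` is amenable: there is a
norm-one positive linear functional `φ` on `LUC S` with `φ (δ_a * f) = φ f` for all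
`a ∈ S` and `f ∈ LUC S`. -/
theorem liouville_implies_amenable_metric_semigroup
    {S : Type*} [Semigroup S] [MetricSpace S] [ContinuousMul S]
    [MeasurableSpace S] [BorelSpace S]
    (π : Measure S) [IsProbabilityMeasure π]
    (htight : ∀ ε : ℝ≥0∞, 0 < ε → ∃ K : Set S, IsCompact K ∧ π Kᶜ < ε)
    (hLiou : ∀ f : S →ᵇ ℂ, f ∈ LUC S →
      (∀ x : S, ∫ y, f (x * y) ∂π = f x) → ∃ c : ℂ, ∀ x : S, f x = c) :
    ∃ φ : LUC S →L[ℂ] ℂ, ‖φ‖ = 1 ∧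
      (∀ f : LUC S, (∀ x : S, ∃ r : ℝ, 0 ≤ r ∧ (f : S →ᵇ ℂ) x = r) →
        ∃ r : ℝ, 0 ≤ r ∧ φ f = r) ∧
      (∀ (a : S) (f : LUC S), φ (lTransL a f) = φ f) := by
  have hne : Nonempty S := by
    by_contra h
    rw [not_nonempty_iff] at h
    have h1 : π Set.univ = 1 := measure_univ
    rw [Set.univ_eq_empty_iff.2 h] at h1
    simp at h1
  obtain ⟨x₀⟩ := hne
  have hφ : ∃ φ : LUC S →L[ℂ] ℂ, (∀ f : LUC S, φ f = mMean π x₀ (lTransL x₀ f)) ∧ ‖φ‖ ≤ 1 := by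
    refine ⟨LinearMap.mkContinuous
      { toFun := fun f : LUC S => mMean π x₀ (lTransL x₀ f)
        map_add' := fun f g => by
          show mMean π x₀ (lTransL x₀ (f + g)) = _
          rw [lTransL_add, mMean_add]
        map_smul' := fun c f => by
          show mMean π x₀ (lTransL x₀ (c • f)) = _
          rw [lTransL_smul]
          simpa using mMean_smul π x₀ c (lTransL x₀ f) } 1
      (fun f => by rw [one_mul]; exact le_trans (norm_mMean_le π x₀ _) (norm_lTransL_le x₀ f)),
      fun f => rfl, LinearMap.mkContinuous_norm_le _ zero_le_one _⟩
  obtain ⟨φ, hφ_app, hφ_le⟩ := hφ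
  refine ⟨φ, ?_, ?_, ?_⟩
  · refine le_antisymm hφ_le ?_
    have hone : φ (oneL : LUC S) = 1 := by
      rw [hφ_app, lTransL_oneL, mMean_one]
    have hnorm1 : ‖(oneL : LUC S)‖ = 1 := by
      haveI : Nonempty S := ⟨x₀⟩
      show ‖((oneL : LUC S) : S →ᵇ ℂ)‖ = 1
      show ‖(1 : S →ᵇ ℂ)‖ = 1
      rw [show (1 : S →ᵇ ℂ) = BoundedContinuousFunction.const S (1 : ℂ) from rfl,
        BoundedContinuousFunction.norm_const_eq]
      simp
    have := φ.le_opNorm (oneL : LUC S)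
    rw [hone, hnorm1, mul_one] at this
    simpa using this
  · intro f hf
    rw [hφ_app]
    refine mMean_nonneg π x₀ (lTransL x₀ f) fun x => ?_
    show ∃ r : ℝ, 0 ≤ r ∧ (lTrans x₀ (f : S →ᵇ ℂ)) x = r
    rw [lTrans_apply]
    exact hf (x₀ * x)
  · intro a f
    obtain ⟨c, hc⟩ := hLiou (harmF π x₀ f) (harmF_mem_LUC π x₀ f)
      (harmF_harmonic π x₀ htight f)
    rw [hφ_app, hφ_app, lTransL_comp]
    have h1 : mMean π x₀ (lTransL (a * x₀) f) = harmF π x₀ f (a * x₀) := rfl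
    have h2 : mMean π x₀ (lTransL x₀ f) = harmF π x₀ f x₀ := rfl
    rw [h1, h2, hc (a * x₀), hc x₀]
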